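/- arXiv:1712.06392 — 2 statements merged into one kernel-verified Lean document; each statement's English description precedes it below -/
import Mathlib

section
/- Let jG ⊆ K[x1,…,x7] be the monomial ideal generated by x7², x7x6, x7x5, x7x4, x7x3, x7x2, x7x1, x6², x6x5, x6x4, x6x3, x6x2, x6x1, x5², x5x4, x5x3, x5x2, x5x1, x4², x4x3, x4x2, x4x1², x3³, x3²x2, x3²x1, x3x2², x3x2x1, x3x1², x2³, x2²x1, x2x1², x1⁴ (over any field K). Then: (i) jG is strongly stable; and (ii) jG is an affine 3-segment with respect to the weight vector ω given by ω(x1)=4, ω(x2)=5, ω(x3)=6, ω(x4)=8, ω(x5)=9, ω(x6)=10, ω(x7)=11, i.e. for every monomial x^α in the listed minimal generating set of jG and every monomial x^γ ∉ jG with total degree |γ| ≤ max(3, |α|), one has ω-deg(x^α) > ω-deg(x^γ), where ω-deg(x^β) = Σ_i ω(x_i)·β_i. -/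
open MvPolynomial

/-- A monomial ideal `J` is strongly stable if, for every monomial `xᵅ ∈ J` and indices
`i < k` with `x_i ∣ xᵅ`, the monomial `(xᵅ / x_i) · x_k` also lies in `J`. -/
def StronglyStable {n : ℕ} {K : Type} [Field K] (J : Ideal (MvPolynomial (Fin n) K)) : Prop :=
  ∀ α : Fin n →₀ ℕ, (monomial α (1 : K)) ∈ J →
    ∀ i k : Fin n, i < k → α i ≠ 0 →
      (monomial (α - Finsupp.single i 1 + Finsupp.single k 1) (1 : K)) ∈ J

/-- The `ω`-degree of a monomial exponent `β`, i.e. `Σ_i ω(x_i)·β_i`. -/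
def wdeg {n : ℕ} (ω : Fin n → ℕ) (β : Fin n →₀ ℕ) : ℕ :=
  β.sum fun i e => ω i * e

/-- The minimal monomial generators of `jG ⊆ K[x₁,…,x₇]` as exponent vectors
(`x_i` corresponds to index `i - 1`):
`x₇², x₇x₆, x₇x₅, x₇x₄, x₇x₃, x₇x₂, x₇x₁, x₆², x₆x₅, x₆x₄, x₆x₃, x₆x₂, x₆x₁, x₅², x₅x₄,
x₅x₃, x₅x₂, x₅x₁, x₄², x₄x₃, x₄x₂, x₄x₁², x₃³, x₃²x₂, x₃²x₁, x₃x₂², x₃x₂x₁, x₃x₁², x₂³,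
x₂²x₁, x₂x₁², x₁⁴`. -/
noncomputable def jGGens7 : List (Fin 7 →₀ ℕ) :=
  [Finsupp.single 6 2, Finsupp.single 6 1 + Finsupp.single 5 1,
   Finsupp.single 6 1 + Finsupp.single 4 1, Finsupp.single 6 1 + Finsupp.single 3 1,
   Finsupp.single 6 1 + Finsupp.single 2 1, Finsupp.single 6 1 + Finsupp.single 1 1,
   Finsupp.single 6 1 + Finsupp.single 0 1, Finsupp.single 5 2,
   Finsupp.single 5 1 + Finsupp.single 4 1, Finsupp.single 5 1 + Finsupp.single 3 1,
   Finsupp.single 5 1 + Finsupp.single 2 1, Finsupp.single 5 1 + Finsupp.single 1 1,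
   Finsupp.single 5 1 + Finsupp.single 0 1, Finsupp.single 4 2,
   Finsupp.single 4 1 + Finsupp.single 3 1, Finsupp.single 4 1 + Finsupp.single 2 1,
   Finsupp.single 4 1 + Finsupp.single 1 1, Finsupp.single 4 1 + Finsupp.single 0 1,
   Finsupp.single 3 2, Finsupp.single 3 1 + Finsupp.single 2 1,
   Finsupp.single 3 1 + Finsupp.single 1 1, Finsupp.single 3 1 + Finsupp.single 0 2,
   Finsupp.single 2 3, Finsupp.single 2 2 + Finsupp.single 1 1,
   Finsupp.single 2 2 + Finsupp.single 0 1, Finsupp.single 2 1 + Finsupp.single 1 2,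
   Finsupp.single 2 1 + Finsupp.single 1 1 + Finsupp.single 0 1,
   Finsupp.single 2 1 + Finsupp.single 0 2, Finsupp.single 1 3,
   Finsupp.single 1 2 + Finsupp.single 0 1, Finsupp.single 1 1 + Finsupp.single 0 2,
   Finsupp.single 0 4]

/-- The monomial ideal `jG ⊆ K[x₁,…,x₇]`. -/
noncomputable def jG7 (K : Type) [Field K] : Ideal (MvPolynomial (Fin 7) K) :=
  Ideal.span ((fun α => monomial α (1 : K)) '' {α | α ∈ jGGens7})

/-! ### Auxiliary machinery -/

/-- Functional versions of the generators. -/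
def gensF : List (Fin 7 → ℕ) :=
  [![0,0,0,0,0,0,2], ![0,0,0,0,0,1,1], ![0,0,0,0,1,0,1], ![0,0,0,1,0,0,1],
   ![0,0,1,0,0,0,1], ![0,1,0,0,0,0,1], ![1,0,0,0,0,0,1], ![0,0,0,0,0,2,0],
   ![0,0,0,0,1,1,0], ![0,0,0,1,0,1,0], ![0,0,1,0,0,1,0], ![0,1,0,0,0,1,0],
   ![1,0,0,0,0,1,0], ![0,0,0,0,2,0,0], ![0,0,0,1,1,0,0], ![0,0,1,0,1,0,0],
   ![0,1,0,0,1,0,0], ![1,0,0,0,1,0,0], ![0,0,0,2,0,0,0], ![0,0,1,1,0,0,0],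
   ![0,1,0,1,0,0,0], ![2,0,0,1,0,0,0], ![0,0,3,0,0,0,0], ![0,1,2,0,0,0,0],
   ![1,0,2,0,0,0,0], ![0,2,1,0,0,0,0], ![1,1,1,0,0,0,0], ![2,0,1,0,0,0,0],
   ![0,3,0,0,0,0,0], ![1,2,0,0,0,0,0], ![2,1,0,0,0,0,0], ![4,0,0,0,0,0,0]]

theorem coe_gens : List.Forall₂ (fun (g : Fin 7 →₀ ℕ) f => ⇑g = f) jGGens7 gensF := by
  unfold jGGens7 gensF
  repeat' constructor
  all_goals (funext j; fin_cases j <;> simp [Finsupp.single_apply] <;> decide)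

theorem forall2_mem_left {α β : Type*} {R : α → β → Prop} {l₁ : List α} {l₂ : List β}
    (h : List.Forall₂ R l₁ l₂) {a : α} (ha : a ∈ l₁) : ∃ b ∈ l₂, R a b := by
  induction h with
  | nil => cases ha
  | cons hr _ ih =>
    rcases List.mem_cons.mp ha with rfl | ha'
    · exact ⟨_, List.mem_cons_self, hr⟩
    · obtain ⟨b, hb, hrb⟩ := ih ha'
      exact ⟨b, List.mem_cons_of_mem _ hb, hrb⟩

theorem forall2_mem_right {α β : Type*} {R : α → β → Prop} {l₁ : List α} {l₂ : List β}
    (h : List.Forall₂ R l₁ l₂) {b : β} (hb : b ∈ l₂) : ∃ a ∈ l₁, R a b := by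
  induction h with
  | nil => cases hb
  | cons hr _ ih =>
    rcases List.mem_cons.mp hb with rfl | hb'
    · exact ⟨_, List.mem_cons_self, hr⟩
    · obtain ⟨a, ha, hra⟩ := ih hb'
      exact ⟨a, List.mem_cons_of_mem _ ha, hra⟩

/-- Membership of a monomial in `jG7`, via the functional generators. -/
theorem mem_jG7_iff {K : Type} [Field K] (γ : Fin 7 →₀ ℕ) :
    (monomial γ (1 : K)) ∈ jG7 K ↔ ∃ f ∈ gensF, ∀ j, f j ≤ γ j := by
  rw [jG7, mem_ideal_span_monomial_image]
  constructor
  · intro h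
    obtain ⟨g, hg, hle⟩ := h γ (by simp [support_monomial])
    obtain ⟨f, hf, hcf⟩ := forall2_mem_left coe_gens hg
    exact ⟨f, hf, fun j => hcf ▸ (Finsupp.le_def.mp hle j)⟩
  · rintro ⟨f, hf, hle⟩ xi hxi
    obtain ⟨g, hg, hcg⟩ := forall2_mem_right coe_gens hf
    have hxi' : xi = γ := by
      have := hxi; simp [support_monomial] at this; exact this.symm
    subst hxi'
    exact ⟨g, hg, Finsupp.le_def.mpr fun j => by rw [show g j = f j from congrFun hcg j]; exact hle j⟩

theorem stable_gens : ∀ f ∈ gensF, ∀ i k : Fin 7, i < k → f i ≠ 0 →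
    ∃ f' ∈ gensF, ∀ j, f' j ≤ f j - (if i = j then 1 else 0) + (if k = j then 1 else 0) := by
  decide

theorem gens_facts : ∀ f ∈ gensF,
    (∑ j, f j) ≤ 4 ∧ 13 ≤ ∑ j, (![4,5,6,8,9,10,11] : Fin 7 → ℕ) j * f j := by
  decide

theorem exlt {c f : Fin 7 → ℕ} (h : ∃ j, c j < f j) :
    c 0 < f 0 ∨ c 1 < f 1 ∨ c 2 < f 2 ∨ c 3 < f 3 ∨ c 4 < f 4 ∨ c 5 < f 5 ∨ c 6 < f 6 := by
  obtain ⟨j, hj⟩ := h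
  fin_cases j <;> tauto

theorem v0 (a b c d e f g : ℕ) : (![a,b,c,d,e,f,g] : Fin 7 → ℕ) 0 = a := rfl
theorem v1 (a b c d e f g : ℕ) : (![a,b,c,d,e,f,g] : Fin 7 → ℕ) 1 = b := rfl
theorem v2 (a b c d e f g : ℕ) : (![a,b,c,d,e,f,g] : Fin 7 → ℕ) 2 = c := rfl
theorem v3 (a b c d e f g : ℕ) : (![a,b,c,d,e,f,g] : Fin 7 → ℕ) 3 = d := rfl
theorem v4 (a b c d e f g : ℕ) : (![a,b,c,d,e,f,g] : Fin 7 → ℕ) 4 = e := rfl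
theorem v5 (a b c d e f g : ℕ) : (![a,b,c,d,e,f,g] : Fin 7 → ℕ) 5 = f := rfl
theorem v6 (a b c d e f g : ℕ) : (![a,b,c,d,e,f,g] : Fin 7 → ℕ) 6 = g := rfl

/-- Every monomial of total degree at most `4` lying outside the ideal has `ω`-degree
at most `12`. -/
theorem keyB (c : Fin 7 → ℕ) (h : ∀ f ∈ gensF, ∃ j, c j < f j)
    (hs : ∑ j, c j ≤ 4) : ∑ j, (![4,5,6,8,9,10,11] : Fin 7 → ℕ) j * c j ≤ 12 := by
  have E : ∀ f ∈ gensF, c 0 < f 0 ∨ c 1 < f 1 ∨ c 2 < f 2 ∨ c 3 < f 3 ∨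
      c 4 < f 4 ∨ c 5 < f 5 ∨ c 6 < f 6 := fun f hf => exlt (h f hf)
  rw [Fin.sum_univ_seven] at hs
  rw [Fin.sum_univ_seven]
  simp only [v0, v1, v2, v3, v4, v5, v6]
  by_cases h6 : c 6 = 0
  · by_cases h5 : c 5 = 0
    · by_cases h4 : c 4 = 0
      · by_cases h3 : c 3 = 0
        · have g23 := E ![0,0,3,0,0,0,0] (by simp [gensF])
          have g24 := E ![0,1,2,0,0,0,0] (by simp [gensF])
          have g25 := E ![1,0,2,0,0,0,0] (by simp [gensF])
          have g26 := E ![0,2,1,0,0,0,0] (by simp [gensF])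
          have g27 := E ![1,1,1,0,0,0,0] (by simp [gensF])
          have g28 := E ![2,0,1,0,0,0,0] (by simp [gensF])
          have g29 := E ![0,3,0,0,0,0,0] (by simp [gensF])
          have g30 := E ![1,2,0,0,0,0,0] (by simp [gensF])
          have g31 := E ![2,1,0,0,0,0,0] (by simp [gensF])
          have g32 := E ![4,0,0,0,0,0,0] (by simp [gensF])
          simp only [v0, v1, v2, v3, v4, v5, v6] at g23 g24 g25 g26 g27 g28 g29 g30 g31 g32
          clear E h
          omega
        · have g19 := E ![0,0,0,2,0,0,0] (by simp [gensF])
          have g20 := E ![0,0,1,1,0,0,0] (by simp [gensF])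
          have g21 := E ![0,1,0,1,0,0,0] (by simp [gensF])
          have g22 := E ![2,0,0,1,0,0,0] (by simp [gensF])
          simp only [v0, v1, v2, v3, v4, v5, v6] at g19 g20 g21 g22
          clear E h
          omega
      · have g14 := E ![0,0,0,0,2,0,0] (by simp [gensF])
        have g15 := E ![0,0,0,1,1,0,0] (by simp [gensF])
        have g16 := E ![0,0,1,0,1,0,0] (by simp [gensF])
        have g17 := E ![0,1,0,0,1,0,0] (by simp [gensF])
        have g18 := E ![1,0,0,0,1,0,0] (by simp [gensF])
        simp only [v0, v1, v2, v3, v4, v5, v6] at g14 g15 g16 g17 g18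
        clear E h
        omega
    · have g08 := E ![0,0,0,0,0,2,0] (by simp [gensF])
      have g09 := E ![0,0,0,0,1,1,0] (by simp [gensF])
      have g10 := E ![0,0,0,1,0,1,0] (by simp [gensF])
      have g11 := E ![0,0,1,0,0,1,0] (by simp [gensF])
      have g12 := E ![0,1,0,0,0,1,0] (by simp [gensF])
      have g13 := E ![1,0,0,0,0,1,0] (by simp [gensF])
      simp only [v0, v1, v2, v3, v4, v5, v6] at g08 g09 g10 g11 g12 g13
      clear E h
      omega
  · have g01 := E ![0,0,0,0,0,0,2] (by simp [gensF])
    have g02 := E ![0,0,0,0,0,1,1] (by simp [gensF])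
    have g03 := E ![0,0,0,0,1,0,1] (by simp [gensF])
    have g04 := E ![0,0,0,1,0,0,1] (by simp [gensF])
    have g05 := E ![0,0,1,0,0,0,1] (by simp [gensF])
    have g06 := E ![0,1,0,0,0,0,1] (by simp [gensF])
    have g07 := E ![1,0,0,0,0,0,1] (by simp [gensF])
    simp only [v0, v1, v2, v3, v4, v5, v6] at g01 g02 g03 g04 g05 g06 g07
    clear E h
    omega

/-- `jG ⊆ K[x₁,…,x₇]` is strongly stable, and it is an affine `3`-segment for the weight
vector `ω = (4, 5, 6, 8, 9, 10, 11)` (on `x₁, …, x₇`). -/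
theorem jG7_stronglyStable_and_segment (K : Type) [Field K] :
    StronglyStable (jG7 K) ∧
    (∀ α ∈ jGGens7, ∀ γ : Fin 7 →₀ ℕ,
      (monomial γ (1 : K)) ∉ jG7 K →
      (γ.sum fun _ e => e) ≤ max 3 (α.sum fun _ e => e) →
      wdeg ![4, 5, 6, 8, 9, 10, 11] γ < wdeg ![4, 5, 6, 8, 9, 10, 11] α) := by
  have hsum : ∀ β : Fin 7 →₀ ℕ, (β.sum fun _ e => e) = ∑ j, β j :=
    fun β => Finsupp.sum_fintype _ _ (fun _ => rfl)
  have hwdeg : ∀ β : Fin 7 →₀ ℕ,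
      wdeg ![4, 5, 6, 8, 9, 10, 11] β = ∑ j, (![4,5,6,8,9,10,11] : Fin 7 → ℕ) j * β j := by
    intro β
    rw [wdeg]
    exact Finsupp.sum_fintype _ _ (fun i => mul_zero _)
  constructor
  · intro α hα i k hik hαi
    rw [mem_jG7_iff] at hα ⊢
    obtain ⟨f, hf, hle⟩ := hα
    have hcoord : ∀ j, ((α - Finsupp.single i 1 + Finsupp.single k 1) : Fin 7 →₀ ℕ) j
        = α j - (if i = j then 1 else 0) + (if k = j then 1 else 0) := by
      intro j
      simp [Finsupp.single_apply]
    by_cases hfi : f i = 0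
    · refine ⟨f, hf, fun j => ?_⟩
      rw [hcoord j]
      rcases eq_or_ne i j with rfl | hij
      · simp [hfi]
      · have := hle j
        simp only [if_neg hij]
        split_ifs <;> omega
    · obtain ⟨f', hf', hle'⟩ := stable_gens f hf i k hik hfi
      refine ⟨f', hf', fun j => (hle' j).trans ?_⟩
      rw [hcoord j]
      exact Nat.add_le_add_right (Nat.sub_le_sub_right (hle j) _) _
  · intro α hα γ hγ hdeg
    obtain ⟨f, hf, hcf⟩ := forall2_mem_left coe_gens hα
    obtain ⟨hd4, hw13⟩ := gens_facts f hf
    rw [mem_jG7_iff] at hγ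
    push_neg at hγ
    have hγd : ∑ j, γ j ≤ 4 := by
      rw [hsum γ, hsum α] at hdeg
      have hα4 : ∑ j, α j ≤ 4 := by
        calc ∑ j, α j = ∑ j, f j := by rw [hcf]
        _ ≤ 4 := hd4
      omega
    have key := keyB ⇑γ hγ hγd
    rw [hwdeg γ, hwdeg α]
    have hαw : ∑ j, (![4,5,6,8,9,10,11] : Fin 7 → ℕ) j * α j
        = ∑ j, (![4,5,6,8,9,10,11] : Fin 7 → ℕ) j * f j := by rw [hcf]
    omega
end

section
/- Let jG ⊆ K[x1,…,x5] be the monomial ideal generated by x5², x4x5, x3x5, x2x5, x1x5, x4², x3x4, x2x4, x1x4, x3², x2²x3, x1x2x3, x1²x3, x2³, x1x2², x1²x2, x1⁴ (over any field K). Then: (i) jG is strongly stable; and (ii) jG is an affine 3-segment with respect to the weight vector ω given by ω(x1)=3, ω(x2)=4, ω(x3)=5, ω(x4)=7, ω(x5)=8, i.e. for every monomial x^α in the listed minimal generating set of jG and every monomial x^γ ∉ jG with total degree |γ| ≤ max(3, |α|), one has ω-deg(x^α) > ω-deg(x^γ), where ω-deg(x^β) = Σ_i ω(x_i)·β_i.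 -/
open MvPolynomial

/-- The minimal monomial generators of `jG ⊆ K[x₁,…,x₅]` as exponent vectors
(`x_i` corresponds to index `i - 1`):
`x₅², x₄x₅, x₃x₅, x₂x₅, x₁x₅, x₄², x₃x₄, x₂x₄, x₁x₄, x₃², x₂²x₃, x₁x₂x₃, x₁²x₃, x₂³,
x₁x₂², x₁²x₂, x₁⁴`. -/
noncomputable def jGGens5 : List (Fin 5 →₀ ℕ) :=
  [Finsupp.single 4 2, Finsupp.single 4 1 + Finsupp.single 3 1,
   Finsupp.single 4 1 + Finsupp.single 2 1, Finsupp.single 4 1 + Finsupp.single 1 1,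
   Finsupp.single 4 1 + Finsupp.single 0 1, Finsupp.single 3 2,
   Finsupp.single 3 1 + Finsupp.single 2 1, Finsupp.single 3 1 + Finsupp.single 1 1,
   Finsupp.single 3 1 + Finsupp.single 0 1, Finsupp.single 2 2,
   Finsupp.single 2 1 + Finsupp.single 1 2,
   Finsupp.single 2 1 + Finsupp.single 1 1 + Finsupp.single 0 1,
   Finsupp.single 2 1 + Finsupp.single 0 2, Finsupp.single 1 3,
   Finsupp.single 1 2 + Finsupp.single 0 1, Finsupp.single 1 1 + Finsupp.single 0 2,
   Finsupp.single 0 4]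

/-- The monomial ideal `jG ⊆ K[x₁,…,x₅]`. -/
noncomputable def jG5 (K : Type) [Field K] : Ideal (MvPolynomial (Fin 5) K) :=
  Ideal.span ((fun α => monomial α (1 : K)) '' {α | α ∈ jGGens5})

/-! ### Auxiliary lemmas -/

/-- The numeric divisibility condition: some generator of `jG5` divides the monomial with
exponents `(a, b, c, d, e)` (for variables `x₁, …, x₅`). -/
def D (a b c d e : ℕ) : Prop :=
  2 ≤ e ∨ (1 ≤ d ∧ 1 ≤ e) ∨ (1 ≤ c ∧ 1 ≤ e) ∨ (1 ≤ b ∧ 1 ≤ e) ∨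
  (1 ≤ a ∧ 1 ≤ e) ∨ 2 ≤ d ∨ (1 ≤ c ∧ 1 ≤ d) ∨ (1 ≤ b ∧ 1 ≤ d) ∨
  (1 ≤ a ∧ 1 ≤ d) ∨ 2 ≤ c ∨ (2 ≤ b ∧ 1 ≤ c) ∨ (1 ≤ a ∧ 1 ≤ b ∧ 1 ≤ c) ∨
  (2 ≤ a ∧ 1 ≤ c) ∨ 3 ≤ b ∨ (1 ≤ a ∧ 2 ≤ b) ∨ (2 ≤ a ∧ 1 ≤ b) ∨ 4 ≤ a

lemma jG5_key (a b c d e : ℕ) (h : ¬ D a b c d e) (hd : a + b + c + d + e ≤ 4) :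
    3*a + 4*b + 5*c + 7*d + 8*e ≤ 9 := by
  unfold D at h; push_neg at h; omega

lemma jG5_step01 (a b c d e : ℕ) (ha : 1 ≤ a) (h : D a b c d e) : D (a-1) (b+1) c d e := by
  unfold D at *; obtain h|h|h|h|h|h|h|h|h|h|h|h|h|h|h|h|h := h <;> omega
lemma jG5_step02 (a b c d e : ℕ) (ha : 1 ≤ a) (h : D a b c d e) : D (a-1) b (c+1) d e := by
  unfold D at *; obtain h|h|h|h|h|h|h|h|h|h|h|h|h|h|h|h|h := h <;> omega
lemma jG5_step03 (a b c d e : ℕ) (ha : 1 ≤ a) (h : D a b c d e) : D (a-1) b c (d+1) e := by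
  unfold D at *; obtain h|h|h|h|h|h|h|h|h|h|h|h|h|h|h|h|h := h <;> omega
lemma jG5_step04 (a b c d e : ℕ) (ha : 1 ≤ a) (h : D a b c d e) : D (a-1) b c d (e+1) := by
  unfold D at *; obtain h|h|h|h|h|h|h|h|h|h|h|h|h|h|h|h|h := h <;> omega
lemma jG5_step12 (a b c d e : ℕ) (hb : 1 ≤ b) (h : D a b c d e) : D a (b-1) (c+1) d e := by
  unfold D at *; obtain h|h|h|h|h|h|h|h|h|h|h|h|h|h|h|h|h := h <;> omega
lemma jG5_step13 (a b c d e : ℕ) (hb : 1 ≤ b) (h : D a b c d e) : D a (b-1) c (d+1) e := by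
  unfold D at *; obtain h|h|h|h|h|h|h|h|h|h|h|h|h|h|h|h|h := h <;> omega
lemma jG5_step14 (a b c d e : ℕ) (hb : 1 ≤ b) (h : D a b c d e) : D a (b-1) c d (e+1) := by
  unfold D at *; obtain h|h|h|h|h|h|h|h|h|h|h|h|h|h|h|h|h := h <;> omega
lemma jG5_step23 (a b c d e : ℕ) (hc : 1 ≤ c) (h : D a b c d e) : D a b (c-1) (d+1) e := by
  unfold D at *; obtain h|h|h|h|h|h|h|h|h|h|h|h|h|h|h|h|h := h <;> omega
lemma jG5_step24 (a b c d e : ℕ) (hc : 1 ≤ c) (h : D a b c d e) : D a b (c-1) d (e+1) := by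
  unfold D at *; obtain h|h|h|h|h|h|h|h|h|h|h|h|h|h|h|h|h := h <;> omega
lemma jG5_step34 (a b c d e : ℕ) (hd : 1 ≤ d) (h : D a b c d e) : D a b c (d-1) (e+1) := by
  unfold D at *; obtain h|h|h|h|h|h|h|h|h|h|h|h|h|h|h|h|h := h <;> omega

lemma mem_jG5_iff {K : Type} [Field K] (γ : Fin 5 →₀ ℕ) :
    monomial γ (1:K) ∈ jG5 K ↔ ∃ g ∈ jGGens5, g ≤ γ := by
  rw [jG5, mem_ideal_span_monomial_image]
  simp [support_monomial]

lemma jG5_le5 (g γ : Fin 5 →₀ ℕ) :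
    g ≤ γ ↔ g 0 ≤ γ 0 ∧ g 1 ≤ γ 1 ∧ g 2 ≤ γ 2 ∧ g 3 ≤ γ 3 ∧ g 4 ≤ γ 4 := by
  rw [Finsupp.le_def]
  exact ⟨fun h => ⟨h 0, h 1, h 2, h 3, h 4⟩, fun ⟨h0,h1,h2,h3,h4⟩ i => by fin_cases i <;> assumption⟩

lemma jG5_div_iff (γ : Fin 5 →₀ ℕ) :
    (∃ g ∈ jGGens5, g ≤ γ) ↔ D (γ 0) (γ 1) (γ 2) (γ 3) (γ 4) := by
  unfold D
  simp only [jGGens5, List.mem_cons, List.not_mem_nil, or_false, exists_eq_or_imp, exists_eq_left,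
    jG5_le5, Finsupp.add_apply, Finsupp.single_apply]
  simp only [Fin.isValue, show ((4:Fin 5)=0)=False from by decide,
    show ((4:Fin 5)=1)=False from by decide, show ((4:Fin 5)=2)=False from by decide,
    show ((4:Fin 5)=3)=False from by decide, show ((3:Fin 5)=0)=False from by decide,
    show ((3:Fin 5)=1)=False from by decide, show ((3:Fin 5)=2)=False from by decide,
    show ((3:Fin 5)=4)=False from by decide, show ((2:Fin 5)=0)=False from by decide,
    show ((2:Fin 5)=1)=False from by decide, show ((2:Fin 5)=3)=False from by decide,
    show ((2:Fin 5)=4)=False from by decide, show ((1:Fin 5)=0)=False from by decide,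
    show ((1:Fin 5)=2)=False from by decide, show ((1:Fin 5)=3)=False from by decide,
    show ((1:Fin 5)=4)=False from by decide, show ((0:Fin 5)=1)=False from by decide,
    show ((0:Fin 5)=2)=False from by decide, show ((0:Fin 5)=3)=False from by decide,
    show ((0:Fin 5)=4)=False from by decide, if_false, if_true, add_zero, zero_add,
    Nat.zero_le, true_and, and_true]

lemma jG5_deg5 (γ : Fin 5 →₀ ℕ) :
    (γ.sum fun _ e => e) = γ 0 + γ 1 + γ 2 + γ 3 + γ 4 := by
  rw [Finsupp.sum_fintype _ _ (fun _ => rfl), Fin.sum_univ_five]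

lemma jG5_wdeg5 (γ : Fin 5 →₀ ℕ) :
    wdeg ![3, 4, 5, 7, 8] γ = 3 * γ 0 + 4 * γ 1 + 5 * γ 2 + 7 * γ 3 + 8 * γ 4 := by
  rw [wdeg, Finsupp.sum_fintype _ _ (fun _ => mul_zero _), Fin.sum_univ_five]
  norm_num [Matrix.cons_val_zero, Matrix.cons_val_one, Matrix.head_cons, Matrix.cons_val_four,
    Matrix.cons_val_succ]
  rfl

/-- `jG ⊆ K[x₁,…,x₅]` is strongly stable, and it is an affine `3`-segment for the weight
vector `ω = (3, 4, 5, 7, 8)` (on `x₁, …, x₅`). -/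
theorem jG5_stronglyStable_and_segment (K : Type) [Field K] :
    StronglyStable (jG5 K) ∧
    (∀ α ∈ jGGens5, ∀ γ : Fin 5 →₀ ℕ,
      (monomial γ (1 : K)) ∉ jG5 K →
      (γ.sum fun _ e => e) ≤ max 3 (α.sum fun _ e => e) →
      wdeg ![3, 4, 5, 7, 8] γ < wdeg ![3, 4, 5, 7, 8] α) := by
  constructor
  · intro α hα i k hik hαi
    rw [mem_jG5_iff, jG5_div_iff] at hα ⊢
    replace hαi : 1 ≤ α i := Nat.one_le_iff_ne_zero.mpr hαi
    have hco : ∀ j : Fin 5, (α - Finsupp.single i 1 + Finsupp.single k 1 : Fin 5 →₀ ℕ) j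
        = α j - (if i = j then 1 else 0) + (if k = j then 1 else 0) := fun j => by
      simp [Finsupp.tsub_apply, Finsupp.single_apply]
    simp only [hco]
    fin_cases i <;> fin_cases k <;>
      first
        | exact absurd hik (by decide)
        | (simp only [Fin.isValue, show ((0:Fin 5)=0)=True from by decide,
            show ((1:Fin 5)=1)=True from by decide, show ((2:Fin 5)=2)=True from by decide,
            show ((3:Fin 5)=3)=True from by decide, show ((4:Fin 5)=4)=True from by decide,
            show ((0:Fin 5)=1)=False from by decide, show ((0:Fin 5)=2)=False from by decide,
            show ((0:Fin 5)=3)=False from by decide, show ((0:Fin 5)=4)=False from by decide,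
            show ((1:Fin 5)=0)=False from by decide, show ((1:Fin 5)=2)=False from by decide,
            show ((1:Fin 5)=3)=False from by decide, show ((1:Fin 5)=4)=False from by decide,
            show ((2:Fin 5)=0)=False from by decide, show ((2:Fin 5)=1)=False from by decide,
            show ((2:Fin 5)=3)=False from by decide, show ((2:Fin 5)=4)=False from by decide,
            show ((3:Fin 5)=0)=False from by decide, show ((3:Fin 5)=1)=False from by decide,
            show ((3:Fin 5)=2)=False from by decide, show ((3:Fin 5)=4)=False from by decide,
            show ((4:Fin 5)=0)=False from by decide, show ((4:Fin 5)=1)=False from by decide,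
            show ((4:Fin 5)=2)=False from by decide, show ((4:Fin 5)=3)=False from by decide,
            if_true, if_false, add_zero, Nat.sub_zero]
           first
             | exact jG5_step01 _ _ _ _ _ hαi hα
             | exact jG5_step02 _ _ _ _ _ hαi hα
             | exact jG5_step03 _ _ _ _ _ hαi hα
             | exact jG5_step04 _ _ _ _ _ hαi hα
             | exact jG5_step12 _ _ _ _ _ hαi hα
             | exact jG5_step13 _ _ _ _ _ hαi hα
             | exact jG5_step14 _ _ _ _ _ hαi hα
             | exact jG5_step23 _ _ _ _ _ hαi hα
             | exact jG5_step24 _ _ _ _ _ hαi hα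
             | exact jG5_step34 _ _ _ _ _ hαi hα)
  · intro α hα γ hγ hdeg
    rw [mem_jG5_iff, jG5_div_iff] at hγ
    rw [jG5_deg5, jG5_deg5] at hdeg
    rw [jG5_wdeg5, jG5_wdeg5]
    simp only [jGGens5, List.mem_cons, List.not_mem_nil, or_false] at hα
    rcases hα with rfl|rfl|rfl|rfl|rfl|rfl|rfl|rfl|rfl|rfl|rfl|rfl|rfl|rfl|rfl|rfl|rfl <;>
      (simp only [Finsupp.add_apply, Finsupp.single_apply, Fin.isValue,
        show ((4:Fin 5)=0)=False from by decide,
        show ((4:Fin 5)=1)=False from by decide, show ((4:Fin 5)=2)=False from by decide,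
        show ((4:Fin 5)=3)=False from by decide, show ((3:Fin 5)=0)=False from by decide,
        show ((3:Fin 5)=1)=False from by decide, show ((3:Fin 5)=2)=False from by decide,
        show ((3:Fin 5)=4)=False from by decide, show ((2:Fin 5)=0)=False from by decide,
        show ((2:Fin 5)=1)=False from by decide, show ((2:Fin 5)=3)=False from by decide,
        show ((2:Fin 5)=4)=False from by decide, show ((1:Fin 5)=0)=False from by decide,
        show ((1:Fin 5)=2)=False from by decide, show ((1:Fin 5)=3)=False from by decide,
        show ((1:Fin 5)=4)=False from by decide, show ((0:Fin 5)=1)=False from by decide,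
        show ((0:Fin 5)=2)=False from by decide, show ((0:Fin 5)=3)=False from by decide,
        show ((0:Fin 5)=4)=False from by decide, if_false, if_true, add_zero,
        zero_add] at hdeg ⊢
       exact lt_of_le_of_lt
         (jG5_key _ _ _ _ _ hγ (le_trans hdeg (by norm_num [Nat.max_def]))) (by norm_num))
end
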